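/- arXiv:1610.04664 — 2 statements merged into one kernel-verified Lean document; each statement's English description precedes it below -/
import Mathlib

section
/- Let μ ∈ ℂ with Re(μ) outside the interval [2 min_Ω(ν)/max_Ω(ρc²), 2 max_Ω(ν)/min_Ω(ρc²)] or Im(μ) ≠ 0. Suppose T₁ f = μ f for some f ∈ G with f ≠ 0, where a(T₁f, v) = 2∫ν div f div v̄, a(u,v) = ∫ρc² div u div v̄, and ‖div·‖ is a norm on G. Then we reach a contradiction: necessarily μ = 2∫ν|div f|² / ∫ρc²|div f|², which is a real number in [2 min(ν)/max(ρc²), 2 max(ν)/min(ρc²)]. -/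
open MeasureTheory Complex

/-- Injectivity part of the localization of `sp(T₁)`: if `T₁ f = μc f` with
`f ≠ 0`, testing the eigenvalue equation with `f` gives
`μc ∫ q |div f|² = 2 ∫ ν |div f|²` (here `F = div f` and `q = ρc²`), so
`μc` is the real Rayleigh quotient `2∫ν|F|²/∫q|F|²`, which lies in
`[2 min ν / max q, 2 max ν / min q]`; hence if `μc` has nonzero imaginary
part or real part outside that interval, we reach a contradiction. -/
theorem eigenvalue_outside_interval_contradiction
    {Ω : Type*} [MeasurableSpace Ω] (μ : Measure Ω)
    (ν q : Ω → ℝ) (F : Ω → ℂ)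
    (νmin νmax : ℝ) (hνmin : 0 ≤ νmin) (hνbd : ∀ x, νmin ≤ ν x ∧ ν x ≤ νmax)
    (qmin qmax : ℝ) (hqmin : 0 < qmin) (hqbd : ∀ x, qmin ≤ q x ∧ q x ≤ qmax)
    (hintq : Integrable (fun x => q x * ‖F x‖ ^ 2) μ)
    (hintν : Integrable (fun x => ν x * ‖F x‖ ^ 2) μ)
    (hintF : Integrable (fun x => ‖F x‖ ^ 2) μ)
    (hFpos : 0 < ∫ x, ‖F x‖ ^ 2 ∂μ)
    (μc : ℂ)
    (heig : μc * ∫ x, ((q x : ℂ) * (F x * starRingEnd ℂ (F x))) ∂μ =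
      2 * ∫ x, ((ν x : ℂ) * (F x * starRingEnd ℂ (F x))) ∂μ)
    (hout : μc.im ≠ 0 ∨ μc.re < 2 * νmin / qmax ∨ 2 * νmax / qmin < μc.re) :
    False := by
  set I := ∫ x, ‖F x‖ ^ 2 ∂μ with hI
  set A := ∫ x, q x * ‖F x‖ ^ 2 ∂μ with hA
  set B := ∫ x, ν x * ‖F x‖ ^ 2 ∂μ with hB
  have hsq : ∀ x, (0:ℝ) ≤ ‖F x‖ ^ 2 := fun x => by positivity
  have hkey : ∀ (g : Ω → ℝ),
      (∫ x, ((g x : ℂ) * (F x * starRingEnd ℂ (F x))) ∂μ)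
        = ((∫ x, g x * ‖F x‖ ^ 2 ∂μ : ℝ) : ℂ) := by
    intro g
    calc ∫ x, ((g x : ℂ) * (F x * starRingEnd ℂ (F x))) ∂μ
        = ∫ x, ((g x * ‖F x‖ ^ 2 : ℝ) : ℂ) ∂μ := by
          congr 1
          funext x
          rw [Complex.mul_conj']
          push_cast
          ring
      _ = ((∫ x, g x * ‖F x‖ ^ 2 ∂μ : ℝ) : ℂ) := integral_ofReal
  rw [hkey q, hkey ν] at heig
  -- bounds on A and B
  have hA_ge : qmin * I ≤ A := by
    rw [hI, ← integral_const_mul]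
    exact integral_mono (hintF.const_mul qmin) hintq
      fun x => mul_le_mul_of_nonneg_right (hqbd x).1 (hsq x)
  have hA_le : A ≤ qmax * I := by
    rw [hI, ← integral_const_mul]
    exact integral_mono hintq (hintF.const_mul qmax)
      fun x => mul_le_mul_of_nonneg_right (hqbd x).2 (hsq x)
  have hB_ge : νmin * I ≤ B := by
    rw [hI, ← integral_const_mul]
    exact integral_mono (hintF.const_mul νmin) hintν
      fun x => mul_le_mul_of_nonneg_right (hνbd x).1 (hsq x)
  have hB_le : B ≤ νmax * I := by
    rw [hI, ← integral_const_mul]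
    exact integral_mono hintν (hintF.const_mul νmax)
      fun x => mul_le_mul_of_nonneg_right (hνbd x).2 (hsq x)
  have hApos : 0 < A := lt_of_lt_of_le (by positivity) hA_ge
  have hqmaxpos : 0 < qmax := lt_of_lt_of_le hqmin (by nlinarith)
  have hνmaxnn : 0 ≤ νmax := by nlinarith
  have hA0 : (A : ℂ) ≠ 0 := by exact_mod_cast hApos.ne'
  have hμ : μc = ((2 * B / A : ℝ) : ℂ) := by
    rw [Complex.ofReal_div, Complex.ofReal_mul, Complex.ofReal_ofNat,
      eq_div_iff hA0]
    exact heig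
  have him : μc.im = 0 := by rw [hμ]; simp
  have hre : μc.re = 2 * B / A := by rw [hμ]; simp
  have hlow : 2 * νmin / qmax ≤ 2 * B / A := by
    rw [div_le_div_iff₀ hqmaxpos hApos]
    nlinarith
  have hhigh : 2 * B / A ≤ 2 * νmax / qmin := by
    rw [div_le_div_iff₀ hApos hqmin]
    nlinarith
  rcases hout with h | h | h
  · exact h him
  · rw [hre] at h; linarith
  · rw [hre] at h; linarith
end

section
/- Let V_h ⊂ V be a finite-dimensional subspace with orthogonal decomposition V_h = G_h ⊕ K_h (K_h = K ∩ V_h, K the kernel of div in V). Suppose every v_h ∈ G_h admits a decomposition v_h = w + χ with w ∈ H^s(Ω)^d ∩ V, χ ∈ K, ‖w‖_{s,Ω} ≤ C‖div v_h‖_{0,Ω} and ‖χ‖_{0,Ω} ≤ C h^s ‖div v_h‖_{0,Ω}. Then the form a(u,v) = ∫ρc² div u div v̄ is uniformly G_h-elliptic: there exists c > 0 independent of h with a(v_h, v_h) ≥ c‖v_h‖²_{H(div,Ω)} for all v_h ∈ G_h. -/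
/-- Uniform discrete ellipticity (Lemma 4.2): if every `v_h` in the discrete
space `G_h` (for mesh size `h ∈ (0,1]`) admits a Helmholtz-type decomposition
`v_h = w + χ` with `D χ = 0` (i.e. `χ` divergence free), `‖w‖ ≤ C‖D v_h‖` and
`‖χ‖ ≤ C h^s ‖D v_h‖`, and `a(v,v) ≥ qmin ‖D v‖²`, then `a` is `G_h`-elliptic
with respect to the `H(div)` norm `(‖v‖² + ‖D v‖²)^{1/2}`, with ellipticity
constant independent of `h`. Here `Hf` plays the role of `L²(Ω)^d`, `Hs` of
`L²(Ω)` and `D` of the divergence operator. -/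
theorem discrete_uniform_ellipticity
    {Hf Hs : Type*} [NormedAddCommGroup Hf] [InnerProductSpace ℂ Hf]
    [NormedAddCommGroup Hs] [InnerProductSpace ℂ Hs]
    (D : Hf →ₗ[ℂ] Hs)
    (Gh : ℝ → Submodule ℂ Hf)
    (a : Hf → Hf → ℂ) (qmin : ℝ) (hqmin : 0 < qmin)
    (ha : ∀ v : Hf, qmin * ‖D v‖ ^ 2 ≤ (a v v).re)
    (C s : ℝ) (hC : 0 < C) (hs : 0 < s)
    (hdecomp : ∀ h ∈ Set.Ioc (0 : ℝ) 1, ∀ v ∈ Gh h,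
      ∃ w χ : Hf, v = w + χ ∧ D χ = 0 ∧
        ‖w‖ ≤ C * ‖D v‖ ∧ ‖χ‖ ≤ C * h ^ s * ‖D v‖) :
    ∃ c > 0, ∀ h ∈ Set.Ioc (0 : ℝ) 1, ∀ v ∈ Gh h,
      c * (‖v‖ ^ 2 + ‖D v‖ ^ 2) ≤ (a v v).re := by
  refine ⟨qmin / (4 * C ^ 2 + 1), by positivity, ?_⟩
  intro h hh v hv
  obtain ⟨w, χ, hvwχ, hDχ, hw, hχ⟩ := hdecomp h hh v hv
  have hhs : h ^ s ≤ 1 := by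
    calc h ^ s ≤ 1 ^ s := Real.rpow_le_rpow (le_of_lt hh.1) hh.2 hs.le
    _ = 1 := Real.one_rpow s
  have hχ' : ‖χ‖ ≤ C * ‖D v‖ := by
    refine hχ.trans ?_
    have : C * h ^ s ≤ C * 1 := by nlinarith
    nlinarith [norm_nonneg (D v)]
  have hv2 : ‖v‖ ≤ 2 * C * ‖D v‖ := by
    calc ‖v‖ = ‖w + χ‖ := by rw [hvwχ]
    _ ≤ ‖w‖ + ‖χ‖ := norm_add_le _ _
    _ ≤ 2 * C * ‖D v‖ := by linarith
  have hsq : ‖v‖ ^ 2 ≤ 4 * C ^ 2 * ‖D v‖ ^ 2 := by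
    nlinarith [norm_nonneg v, norm_nonneg (D v)]
  have key : qmin / (4 * C ^ 2 + 1) * (‖v‖ ^ 2 + ‖D v‖ ^ 2) ≤ qmin * ‖D v‖ ^ 2 := by
    rw [div_mul_eq_mul_div, div_le_iff₀ (by positivity)]
    nlinarith [norm_nonneg (D v)]
  exact key.trans (ha v)
end
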